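/- The seven points P₁=(0,0), P₂=(22270,0), P₃=(26127018/2227, (932064/2227)√2002), P₄=(245363/17, (3144/17)√2002), P₅=(17615968/2227, (238464/2227)√2002), P₆=(56068/17, (3144/17)√2002), P₇=(19079044/2227, -(54168/2227)√2002) in ℝ² have pairwise integral distances; in particular dist(P₁,P₂)=22270, dist(P₁,P₃)=22098, dist(P₁,P₄)=16637, dist(P₁,P₅)=9248, dist(P₁,P₆)=8908, dist(P₁,P₇)=8636, dist(P₂,P₃)=21488, dist(P₂,P₄)=11397, dist(P₂,P₅)=15138, dist(P₂,P₆)=20698, dist(P₂,P₇)=13746, dist(P₃,P₄)=10795, dist(P₃,P₅)=14450, dist(P₃,P₆)=13430, dist(P₃,P₇)=20066, dist(P₄,P₅)=7395, dist(P₄,P₆)=11135, dist(P₄,P₇)=11049, dist(P₅,P₆)=5780, dist(P₅,P₇)=5916, dist(P₆,P₇)=10744. -/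

import Mathlib

noncomputable def pt (x y : ℝ) : EuclideanSpace ℝ (Fin 2) := !₂[x, y]


lemma dist_pt (x1 y1 x2 y2 d : ℝ) (hd : 0 ≤ d)
    (h : (x1 - x2) ^ 2 + (y1 - y2) ^ 2 = d ^ 2) : dist (pt x1 y1) (pt x2 y2) = d := by
  have : dist (pt x1 y1) (pt x2 y2) = Real.sqrt ((x1 - x2) ^ 2 + (y1 - y2) ^ 2) := by
    rw [EuclideanSpace.dist_eq]
    simp [pt, Fin.sum_univ_two, Real.dist_eq, sq_abs]
  rw [this, h, Real.sqrt_sq hd]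

/-- The seven points of the first integral heptagon in general position. -/
noncomputable def P : Fin 7 → EuclideanSpace ℝ (Fin 2) :=
  ![pt 0 0,
    pt 22270 0,
    pt (26127018 / 2227) ((932064 / 2227) * Real.sqrt 2002),
    pt (245363 / 17) ((3144 / 17) * Real.sqrt 2002),
    pt (17615968 / 2227) ((238464 / 2227) * Real.sqrt 2002),
    pt (56068 / 17) ((3144 / 17) * Real.sqrt 2002),
    pt (19079044 / 2227) (-(54168 / 2227) * Real.sqrt 2002)]

/-- All pairwise distances of the heptagon are the asserted integers. -/
theorem heptagon_distances :
    dist (P 0) (P 1) = 22270 ∧ dist (P 0) (P 2) = 22098 ∧ dist (P 0) (P 3) = 16637 ∧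
    dist (P 0) (P 4) = 9248 ∧ dist (P 0) (P 5) = 8908 ∧ dist (P 0) (P 6) = 8636 ∧
    dist (P 1) (P 2) = 21488 ∧ dist (P 1) (P 3) = 11397 ∧ dist (P 1) (P 4) = 15138 ∧
    dist (P 1) (P 5) = 20698 ∧ dist (P 1) (P 6) = 13746 ∧
    dist (P 2) (P 3) = 10795 ∧ dist (P 2) (P 4) = 14450 ∧ dist (P 2) (P 5) = 13430 ∧
    dist (P 2) (P 6) = 20066 ∧
    dist (P 3) (P 4) = 7395 ∧ dist (P 3) (P 5) = 11135 ∧ dist (P 3) (P 6) = 11049 ∧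
    dist (P 4) (P 5) = 5780 ∧ dist (P 4) (P 6) = 5916 ∧
    dist (P 5) (P 6) = 10744 := by
  have hs : Real.sqrt 2002 ^ 2 = 2002 := Real.sq_sqrt (by norm_num)
  simp only [P, show (0:Fin 7)=⟨0,by norm_num⟩ from rfl, show (1:Fin 7)=⟨1,by norm_num⟩ from rfl,
    show (2:Fin 7)=⟨2,by norm_num⟩ from rfl, show (3:Fin 7)=⟨3,by norm_num⟩ from rfl,
    show (4:Fin 7)=⟨4,by norm_num⟩ from rfl, show (5:Fin 7)=⟨5,by norm_num⟩ from rfl,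
    show (6:Fin 7)=⟨6,by norm_num⟩ from rfl, Matrix.cons_val', Matrix.cons_val_zero,
    Matrix.cons_val_one, Matrix.head_cons, Matrix.cons_val_fin_one, Matrix.empty_val']
  refine ⟨?_,?_,?_,?_,?_,?_,?_,?_,?_,?_,?_,?_,?_,?_,?_,?_,?_,?_,?_,?_,?_⟩
  · exact dist_pt _ _ _ _ 22270 (by norm_num) (by linear_combination ((0:ℝ)/1) * hs)
  · exact dist_pt _ _ _ _ 22098 (by norm_num) (by linear_combination ((868743300096:ℝ)/4959529) * hs)
  · exact dist_pt _ _ _ _ 16637 (by norm_num) (by linear_combination ((9884736:ℝ)/289) * hs)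
  · exact dist_pt _ _ _ _ 9248 (by norm_num) (by linear_combination ((56865079296:ℝ)/4959529) * hs)
  · exact dist_pt _ _ _ _ 8908 (by norm_num) (by linear_combination ((9884736:ℝ)/289) * hs)
  · exact dist_pt _ _ _ _ 8636 (by norm_num) (by linear_combination ((2934172224:ℝ)/4959529) * hs)
  · exact dist_pt _ _ _ _ 21488 (by norm_num) (by linear_combination ((868743300096:ℝ)/4959529) * hs)
  · exact dist_pt _ _ _ _ 11397 (by norm_num) (by linear_combination ((9884736:ℝ)/289) * hs)
  · exact dist_pt _ _ _ _ 15138 (by norm_num) (by linear_combination ((56865079296:ℝ)/4959529) * hs)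
  · exact dist_pt _ _ _ _ 20698 (by norm_num) (by linear_combination ((9884736:ℝ)/289) * hs)
  · exact dist_pt _ _ _ _ 13746 (by norm_num) (by linear_combination ((2934172224:ℝ)/4959529) * hs)
  · exact dist_pt _ _ _ _ 10795 (by norm_num) (by linear_combination ((936360000:ℝ)/17161) * hs)
  · exact dist_pt _ _ _ _ 14450 (by norm_num) (by linear_combination ((1664640000:ℝ)/17161) * hs)
  · exact dist_pt _ _ _ _ 13430 (by norm_num) (by linear_combination ((936360000:ℝ)/17161) * hs)
  · exact dist_pt _ _ _ _ 20066 (by norm_num) (by linear_combination ((972653557824:ℝ)/4959529) * hs)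
  · exact dist_pt _ _ _ _ 7395 (by norm_num) (by linear_combination ((104040000:ℝ)/17161) * hs)
  · exact dist_pt _ _ _ _ 11135 (by norm_num) (by linear_combination ((0:ℝ)/1) * hs)
  · exact dist_pt _ _ _ _ 11049 (by norm_num) (by linear_combination ((217185825024:ℝ)/4959529) * hs)
  · exact dist_pt _ _ _ _ 5780 (by norm_num) (by linear_combination ((104040000:ℝ)/17161) * hs)
  · exact dist_pt _ _ _ _ 5916 (by norm_num) (by linear_combination ((85633487424:ℝ)/4959529) * hs)
  · exact dist_pt _ _ _ _ 10744 (by norm_num) (by linear_combination ((217185825024:ℝ)/4959529) * hs)
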